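/- Let A be a homogeneous matrix *-algebra containing I and J, and let M, N be positive semidefinite n×n matrices with projections M', N' onto A. Then ⟨M', N'⟩ ≥ (tr JM)(tr JN)/n², with equality if and only if M'N' is a scalar multiple of J. -/

import Mathlib

open Matrix
open scoped ComplexOrder

open scoped MatrixOrder in
lemma Matrix.posSemidef_iff_eq_transpose_mul_self {n : ℕ} {X : Matrix (Fin n) (Fin n) ℂ} :
    X.PosSemidef ↔ ∃ B : Matrix (Fin n) (Fin n) ℂ, X = Bᴴ * B := by
  constructor
  · intro h
    obtain ⟨B, hB⟩ := CStarAlgebra.nonneg_iff_eq_star_mul_self.mp h.nonneg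
    exact ⟨B, hB⟩
  · rintro ⟨B, rfl⟩
    exact Matrix.posSemidef_conjTranspose_mul_self B

namespace ProjIG
open Polynomial
variable {n : ℕ}

lemma trace_nonneg_of_psd {X : Matrix (Fin n) (Fin n) ℂ} (hX : X.PosSemidef) :
    0 ≤ X.trace := by
  obtain ⟨B, rfl⟩ := Matrix.posSemidef_iff_eq_transpose_mul_self.mp hX
  rw [Matrix.trace]
  refine Finset.sum_nonneg fun i _ => ?_
  have : (Bᴴ * B).diag i = ∑ k, star (B k i) * B k i := by
    simp [Matrix.diag, Matrix.mul_apply, Matrix.conjTranspose_apply]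
  rw [this]
  exact Finset.sum_nonneg fun k _ => star_mul_self_nonneg _

lemma eq_zero_of_trace_eq_zero {X : Matrix (Fin n) (Fin n) ℂ} (hX : X.PosSemidef)
    (h : X.trace = 0) : X = 0 := by
  obtain ⟨B, rfl⟩ := Matrix.posSemidef_iff_eq_transpose_mul_self.mp hX
  suffices hB : B = 0 by simp [hB]
  have ht : ∑ i, ∑ k, star (B k i) * B k i = 0 := by
    rw [← h]
    simp [Matrix.trace, Matrix.diag, Matrix.mul_apply, Matrix.conjTranspose_apply]
  have h1 : ∀ i ∈ Finset.univ, (0:ℂ) ≤ ∑ k, star (B k i) * B k i :=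
    fun i _ => Finset.sum_nonneg fun k _ => star_mul_self_nonneg _
  ext k i
  have h2 := (Finset.sum_eq_zero_iff_of_nonneg h1).mp ht i (Finset.mem_univ i)
  have h3 := (Finset.sum_eq_zero_iff_of_nonneg
    (fun k _ => star_mul_self_nonneg (B k i))).mp h2 k (Finset.mem_univ k)
  have : star (B k i) * B k i = 0 := h3
  have := mul_self_eq_zero (a := ‖B k i‖)
  simpa using (by simpa [Complex.star_def, Complex.mul_conj'] using h3 : star (B k i) * B k i = 0)

lemma trace_mul_nonneg {X Y : Matrix (Fin n) (Fin n) ℂ} (hX : X.PosSemidef)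
    (hY : Y.PosSemidef) : 0 ≤ (X * Y).trace := by
  obtain ⟨B, rfl⟩ := Matrix.posSemidef_iff_eq_transpose_mul_self.mp hX
  have : (Bᴴ * B * Y).trace = (B * Y * Bᴴ).trace := (Matrix.trace_mul_cycle B Y Bᴴ).symm
  rw [this]
  exact trace_nonneg_of_psd (hY.mul_mul_conjTranspose_same B)

lemma trace_mul_eq_zero_iff {X Y : Matrix (Fin n) (Fin n) ℂ} (hX : X.PosSemidef)
    (hY : Y.PosSemidef) : (X * Y).trace = 0 ↔ X * Y = 0 := by
  constructor
  · intro h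
    obtain ⟨B, rfl⟩ := Matrix.posSemidef_iff_eq_transpose_mul_self.mp hX
    obtain ⟨C, rfl⟩ := Matrix.posSemidef_iff_eq_transpose_mul_self.mp hY
    have h1 : (B * (Cᴴ * C) * Bᴴ).trace = 0 := by
      rw [Matrix.trace_mul_cycle B (Cᴴ*C) Bᴴ]; exact h
    have h2 : B * (Cᴴ * C) * Bᴴ = 0 :=
      eq_zero_of_trace_eq_zero ((Matrix.posSemidef_conjTranspose_mul_self C).mul_mul_conjTranspose_same B) h1
    have h3 : (C * Bᴴ)ᴴ * (C * Bᴴ) = 0 := by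
      rw [Matrix.conjTranspose_mul, Matrix.conjTranspose_conjTranspose]
      calc B * Cᴴ * (C * Bᴴ) = B * (Cᴴ * C) * Bᴴ := by noncomm_ring
        _ = 0 := h2
    have h4 : C * Bᴴ = 0 := Matrix.conjTranspose_mul_self_eq_zero.mp h3
    calc Bᴴ * B * (Cᴴ * C) = Bᴴ * (C * Bᴴ)ᴴ * C := by
          rw [Matrix.conjTranspose_mul, Matrix.conjTranspose_conjTranspose]; noncomm_ring
      _ = 0 := by rw [h4]; simp
  · intro h; rw [h, Matrix.trace_zero]



lemma aeval_mem (A : Submodule ℂ (Matrix (Fin n) (Fin n) ℂ))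
    (hmul : ∀ M ∈ A, ∀ N ∈ A, M * N ∈ A)
    (hI : (1 : Matrix (Fin n) (Fin n) ℂ) ∈ A)
    {B : Matrix (Fin n) (Fin n) ℂ} (hB : B ∈ A) (p : ℂ[X]) :
    Polynomial.aeval B p ∈ A := by
  induction p using Polynomial.induction_on with
  | C a => simpa [Algebra.algebraMap_eq_smul_one] using A.smul_mem a hI
  | add p q hp hq => rw [map_add]; exact A.add_mem hp hq
  | monomial k a h =>
      have : (C a * X ^ (k+1) : ℂ[X]) = (C a * X ^ k) * X := by ring
      rw [this, _root_.map_mul, Polynomial.aeval_X]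
      exact hmul _ h _ hB

lemma aeval_conj (U B : Matrix (Fin n) (Fin n) ℂ)
    (hUV : U * Uᴴ = 1) (hVU : Uᴴ * U = 1) (p : ℂ[X]) :
    Polynomial.aeval (U * B * Uᴴ) p = U * (Polynomial.aeval B p) * Uᴴ := by
  induction p using Polynomial.induction_on with
  | C a =>
      simp only [Polynomial.aeval_C, Algebra.algebraMap_eq_smul_one, Matrix.smul_mul,
        Matrix.mul_smul, Matrix.mul_one, hUV]
  | add p q hp hq => rw [map_add, map_add, hp, hq]; noncomm_ring
  | monomial k a h =>
      have e : (C a * X ^ (k+1) : ℂ[X]) = (C a * X ^ k) * X := by ring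
      rw [e]
      rw [show (aeval (U * B * Uᴴ)) (C a * X ^ k * X) =
            (aeval (U * B * Uᴴ)) (C a * X ^ k) * (U * B * Uᴴ) from by
          rw [_root_.map_mul (aeval (U * B * Uᴴ)) (C a * X ^ k) X, Polynomial.aeval_X]]
      rw [show (aeval B) (C a * X ^ k * X) = (aeval B) (C a * X ^ k) * B from by
          rw [_root_.map_mul (aeval B) (C a * X ^ k) X, Polynomial.aeval_X]]
      rw [h]
      calc U * (aeval B) (C a * X ^ k) * Uᴴ * (U * B * Uᴴ)
          = U * ((aeval B) (C a * X ^ k) * (Uᴴ * U) * B) * Uᴴ := by noncomm_ring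
        _ = U * ((aeval B) (C a * X ^ k) * B) * Uᴴ := by rw [hVU]; noncomm_ring

lemma aeval_diagonal (d : Fin n → ℂ) (p : ℂ[X]) :
    Polynomial.aeval (Matrix.diagonal d) p = Matrix.diagonal (fun i => p.eval (d i)) := by
  have h := Polynomial.aeval_algHom_apply (Matrix.diagonalAlgHom (n := Fin n) (α := ℂ) ℂ) d p
  rw [Matrix.diagonalAlgHom_apply] at h
  rw [h, Matrix.diagonalAlgHom_apply]
  have : ((aeval d) p) = fun i => p.eval (d i) := by
    funext i
    rw [Polynomial.aeval_fn_apply, Polynomial.coe_aeval_eq_eval]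
  rw [this]


lemma proj_isHermitian (A : Submodule ℂ (Matrix (Fin n) (Fin n) ℂ))
    (hstar : ∀ M ∈ A, Mᴴ ∈ A)
    {M M' : Matrix (Fin n) (Fin n) ℂ} (hMh : M.IsHermitian) (hM' : M' ∈ A)
    (hMproj : ∀ P ∈ A, Matrix.trace ((M - M') * Pᴴ) = 0) :
    M'.IsHermitian := by
  have key : ∀ P ∈ A, Matrix.trace ((M'ᴴ - M') * Pᴴ) = 0 := by
    intro P hP
    have h1 : Matrix.trace ((M - M') * (Pᴴ)ᴴ) = 0 := hMproj Pᴴ (hstar P hP)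
    have h2 : Matrix.trace ((M - M') * Pᴴ) = 0 := hMproj P hP
    -- trace (M'ᴴ * Pᴴ) = star (trace (P * M')) = star (trace (M' * P))
    have e1 : Matrix.trace (M'ᴴ * Pᴴ) = star (Matrix.trace (M' * P)) := by
      rw [← Matrix.conjTranspose_mul, Matrix.trace_conjTranspose, Matrix.trace_mul_comm]
    have e2 : Matrix.trace (Mᴴ * Pᴴ) = star (Matrix.trace (M * P)) := by
      rw [← Matrix.conjTranspose_mul, Matrix.trace_conjTranspose, Matrix.trace_mul_comm]
    have h3 : Matrix.trace (M' * P) = Matrix.trace (M * P) := by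
      have h1' : Matrix.trace ((M - M') * P) = 0 := by
        rwa [Matrix.conjTranspose_conjTranspose] at h1
      have h1'' : Matrix.trace (M * P) - Matrix.trace (M' * P) = 0 := by
        rw [← Matrix.trace_sub, ← Matrix.sub_mul]; exact h1'
      exact (sub_eq_zero.mp h1'').symm
    have h4 : Matrix.trace (M * Pᴴ) - Matrix.trace (M' * Pᴴ) = 0 := by
      rw [← Matrix.trace_sub, ← Matrix.sub_mul]; exact h2
    rw [Matrix.sub_mul, Matrix.trace_sub, e1, h3, ← e2, hMh.eq]
    exact h4
  -- apply to P = M'ᴴ - M'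
  have hD : (M'ᴴ - M') ∈ A := A.sub_mem (hstar M' hM') hM'
  have h0 := key _ hD
  have hpsd : ((M'ᴴ - M') * (M'ᴴ - M')ᴴ).PosSemidef := Matrix.posSemidef_self_mul_conjTranspose _
  have := eq_zero_of_trace_eq_zero hpsd h0
  have h5 : (M'ᴴ - M')ᴴ = 0 := by
    have := Matrix.conjTranspose_mul_self_eq_zero (A := (M'ᴴ - M')ᴴ).mp (by
      rwa [Matrix.conjTranspose_conjTranspose])
    exact this
  have h6 : M'ᴴ - M' = 0 := by
    have := congrArg Matrix.conjTranspose h5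
    simpa using this
  exact sub_eq_zero.mp h6

lemma proj_posSemidef (A : Submodule ℂ (Matrix (Fin n) (Fin n) ℂ))
    (hmul : ∀ M ∈ A, ∀ N ∈ A, M * N ∈ A)
    (hstar : ∀ M ∈ A, Mᴴ ∈ A)
    (hI : (1 : Matrix (Fin n) (Fin n) ℂ) ∈ A)
    {M M' : Matrix (Fin n) (Fin n) ℂ} (hM : M.PosSemidef) (hM' : M' ∈ A)
    (hMproj : ∀ P ∈ A, Matrix.trace ((M - M') * Pᴴ) = 0) :
    M'.PosSemidef := by
  have hH : M'.IsHermitian := proj_isHermitian A hstar hM.isHermitian hM' hMproj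
  set lam := hH.eigenvalues with hlam
  set U : Matrix (Fin n) (Fin n) ℂ := (hH.eigenvectorUnitary : Matrix (Fin n) (Fin n) ℂ) with hU
  have hUmem : U ∈ Matrix.unitaryGroup (Fin n) ℂ := hH.eigenvectorUnitary.2
  have hUV : U * Uᴴ = 1 := by
    have := (Matrix.mem_unitaryGroup_iff).mp hUmem
    rwa [← Matrix.star_eq_conjTranspose]
  have hVU : Uᴴ * U = 1 := by
    have := (Matrix.mem_unitaryGroup_iff').mp hUmem
    rwa [← Matrix.star_eq_conjTranspose]
  have hspec : M' = U * Matrix.diagonal (RCLike.ofReal ∘ lam) * Uᴴ := by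
    have := hH.spectral_theorem
    rwa [← Matrix.star_eq_conjTranspose]
  -- interpolating polynomial for the negative part
  set f : ℝ → ℝ := fun t => max (-t) 0 with hf
  set s : Finset ℂ := Finset.image (fun i => ((lam i : ℝ) : ℂ)) Finset.univ with hs
  set p : Polynomial ℂ := Lagrange.interpolate s id (fun z => ((f z.re : ℝ) : ℂ)) with hpdef
  have hp : ∀ i : Fin n, p.eval ((lam i : ℝ) : ℂ) = ((f (lam i) : ℝ) : ℂ) := by
    intro i
    have hmem : ((lam i : ℝ) : ℂ) ∈ s := Finset.mem_image_of_mem _ (Finset.mem_univ i)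
    have := Lagrange.eval_interpolate_at_node (v := id)
      (r := fun z => ((f z.re : ℝ) : ℂ)) (Set.injOn_id _) hmem
    simpa [hpdef] using this
  set Q : Matrix (Fin n) (Fin n) ℂ := Polynomial.aeval M' p with hQdef
  have hQA : Q ∈ A := aeval_mem A hmul hI hM' p
  have hQ : Q = U * Matrix.diagonal (fun i => ((f (lam i) : ℝ) : ℂ)) * Uᴴ := by
    have e : (fun i => Polynomial.eval ((RCLike.ofReal ∘ lam) i) p) =
        fun i => ((f (lam i) : ℝ) : ℂ) := by
      funext i
      exact hp i
    rw [hQdef, hspec, aeval_conj U _ hUV hVU, aeval_diagonal, e]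
  have hQpsd : Q.PosSemidef := by
    rw [hQ]
    refine (Matrix.posSemidef_diagonal_iff.mpr fun i => ?_).mul_mul_conjTranspose_same U
    rw [Complex.zero_le_real]
    exact le_max_right _ _
  -- compute trace (M' * Q)
  have htr : Matrix.trace (M' * Q) = ((∑ i, lam i * f (lam i) : ℝ) : ℂ) := by
    rw [hspec, hQ]
    have e : U * Matrix.diagonal (RCLike.ofReal ∘ lam) * Uᴴ *
        (U * Matrix.diagonal (fun i => ((f (lam i) : ℝ) : ℂ)) * Uᴴ) =
        U * (Matrix.diagonal (RCLike.ofReal ∘ lam) *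
          Matrix.diagonal (fun i => ((f (lam i) : ℝ) : ℂ))) * Uᴴ := by
      calc U * Matrix.diagonal (RCLike.ofReal ∘ lam) * Uᴴ *
          (U * Matrix.diagonal (fun i => ((f (lam i) : ℝ) : ℂ)) * Uᴴ)
          = U * (Matrix.diagonal (RCLike.ofReal ∘ lam) * (Uᴴ * U) *
              Matrix.diagonal (fun i => ((f (lam i) : ℝ) : ℂ))) * Uᴴ := by noncomm_ring
        _ = _ := by rw [hVU]; noncomm_ring
    rw [e, Matrix.trace_mul_cycle, ← Matrix.mul_assoc, hVU, Matrix.one_mul,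
      Matrix.diagonal_mul_diagonal, Matrix.trace_diagonal]
    push_cast
    rfl
  -- the trace is nonpositive real, but also nonneg
  have hkey : ∀ i : Fin n, lam i * f (lam i) = -(f (lam i))^2 := by
    intro i
    rcases le_total 0 (lam i) with h | h
    · have : f (lam i) = 0 := max_eq_right (by linarith)
      rw [this]; ring
    · have : f (lam i) = -lam i := max_eq_left (by linarith)
      rw [this]; ring
  have htr' : Matrix.trace (M' * Q) = ((-(∑ i, (f (lam i))^2) : ℝ) : ℂ) := by
    rw [htr]
    congr 1
    rw [← Finset.sum_neg_distrib]
    exact Finset.sum_congr rfl fun i _ => hkey i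
  have hMQ : Matrix.trace (M * Q) = Matrix.trace (M' * Q) := by
    have h2 := hMproj Q hQA
    have h3 : Matrix.trace (M * Qᴴ) - Matrix.trace (M' * Qᴴ) = 0 := by
      rw [← Matrix.trace_sub, ← Matrix.sub_mul]; exact h2
    have h4 := sub_eq_zero.mp h3
    rwa [hQpsd.isHermitian.eq] at h4
  have hnn : (0:ℂ) ≤ Matrix.trace (M * Q) := trace_mul_nonneg hM hQpsd
  rw [hMQ, htr'] at hnn
  have hr : (0:ℝ) ≤ -(∑ i, (f (lam i))^2) := Complex.zero_le_real.mp hnn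
  have hsum0 : ∑ i, (f (lam i))^2 = 0 := le_antisymm (by linarith)
    (Finset.sum_nonneg fun i _ => sq_nonneg _)
  have hzero : ∀ i : Fin n, f (lam i) = 0 := by
    intro i
    have := (Finset.sum_eq_zero_iff_of_nonneg fun i _ => sq_nonneg (f (lam i))).mp hsum0
      i (Finset.mem_univ i)
    exact (pow_eq_zero_iff (by norm_num : (2:ℕ) ≠ 0)).mp this
  refine hH.posSemidef_iff_eigenvalues_nonneg.mpr (Pi.le_def.mpr fun i => ?_)
  have hmax : -lam i ≤ 0 := max_eq_right_iff.mp (hzero i)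
  show (0:ℝ) ≤ lam i
  linarith

end ProjIG

open ProjIG in
/-- Lemma 2: if A is a homogeneous matrix *-algebra containing I and J, and M, N are
PSD matrices with projections M', N' onto A, then ⟨M',N'⟩ ≥ (tr JM)(tr JN)/n²,
with equality iff M'N' is a scalar multiple of J. -/
theorem proj_inner_ge {n : ℕ}
    (A : Submodule ℂ (Matrix (Fin n) (Fin n) ℂ))
    (hmul : ∀ M ∈ A, ∀ N ∈ A, M * N ∈ A)
    (hstar : ∀ M ∈ A, Mᴴ ∈ A)
    (hhom : ∀ M ∈ A, ∀ i j : Fin n, M i i = M j j)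
    (hI : (1 : Matrix (Fin n) (Fin n) ℂ) ∈ A)
    (hJ : (Matrix.of fun _ _ => (1 : ℂ) : Matrix (Fin n) (Fin n) ℂ) ∈ A)
    (M N M' N' : Matrix (Fin n) (Fin n) ℂ)
    (hM : M.PosSemidef) (hN : N.PosSemidef)
    (hM' : M' ∈ A) (hN' : N' ∈ A)
    (hMproj : ∀ P ∈ A, Matrix.trace ((M - M') * Pᴴ) = 0)
    (hNproj : ∀ P ∈ A, Matrix.trace ((N - N') * Pᴴ) = 0) :
    Matrix.trace ((Matrix.of fun _ _ => (1 : ℂ)) * M) *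
        Matrix.trace ((Matrix.of fun _ _ => (1 : ℂ)) * N) / (n ^ 2 : ℂ) ≤
      Matrix.trace (M' * N'ᴴ) ∧
    (Matrix.trace (M' * N'ᴴ) =
        Matrix.trace ((Matrix.of fun _ _ => (1 : ℂ)) * M) *
          Matrix.trace ((Matrix.of fun _ _ => (1 : ℂ)) * N) / (n ^ 2 : ℂ) ↔
      ∃ c : ℂ, M' * N' = c • (Matrix.of fun _ _ => (1 : ℂ))) := by
  classical
  set J : Matrix (Fin n) (Fin n) ℂ := Matrix.of fun _ _ => (1 : ℂ) with hJdef
  rcases Nat.eq_zero_or_pos n with hn | hn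
  · subst hn
    have hT : ∀ X : Matrix (Fin 0) (Fin 0) ℂ, X.trace = 0 := fun X => by
      simp [Matrix.trace]
    refine ⟨?_, ?_, ?_⟩
    · rw [hT, hT, hT]; simp
    · intro _; exact ⟨0, Subsingleton.elim _ _⟩
    · intro _; rw [hT, hT, hT]; simp
  -- main case n > 0
  set i0 : Fin n := ⟨0, hn⟩ with hi0
  have hnne : (n : ℂ) ≠ 0 := Nat.cast_ne_zero.mpr hn.ne'
  have hJH : Jᴴ = J := by
    ext i j; simp [hJdef, Matrix.conjTranspose_apply]
  have hJJ : J * J = (n : ℂ) • J := by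
    ext i j
    simp [hJdef, Matrix.mul_apply]
  have htJ : J.trace = (n : ℂ) := by
    simp [hJdef, Matrix.trace, Matrix.diag]
  -- J is PSD
  have hJpsd : J.PosSemidef := by
    refine Matrix.posSemidef_iff_eq_transpose_mul_self.mpr
      ⟨Matrix.of fun i j => if i = i0 then 1 else 0, ?_⟩
    ext i j
    simp [hJdef, Matrix.mul_apply, Matrix.conjTranspose_apply, apply_ite]
  -- homogeneity: products with J
  have hAJ : ∀ B, B ∈ A → B * J = (Matrix.trace (J * B) / n) • J ∧
      J * B = (Matrix.trace (J * B) / n) • J := by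
    intro B hB
    have hr : ∀ i j, (B * J) i j = ∑ k, B i k := by
      intro i j; simp [Matrix.mul_apply, hJdef]
    have hc : ∀ i j, (J * B) i j = ∑ k, B k j := by
      intro i j; simp [Matrix.mul_apply, hJdef]
    have hrow : ∀ i : Fin n, ∑ k, B i k = ∑ k, B i0 k := by
      intro i
      have := hhom _ (hmul _ hB _ hJ) i i0
      rwa [hr i i, hr i0 i0] at this
    have hcol : ∀ j : Fin n, ∑ k, B k j = ∑ k, B k i0 := by
      intro j
      have := hhom _ (hmul _ hJ _ hB) j i0
      rwa [hc j j, hc i0 i0] at this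
    have htJB : Matrix.trace (J * B) = (n : ℂ) * ∑ k, B k i0 := by
      rw [Matrix.trace]
      calc ∑ i, (J * B).diag i = ∑ _i : Fin n, ∑ k, B k i0 := by
            refine Finset.sum_congr rfl fun i _ => ?_
            rw [Matrix.diag_apply, hc i i, hcol i]
        _ = (n : ℂ) * ∑ k, B k i0 := by
            rw [Finset.sum_const, Finset.card_univ, Fintype.card_fin, nsmul_eq_mul]
    have htBJ : Matrix.trace (B * J) = (n : ℂ) * ∑ k, B i0 k := by
      rw [Matrix.trace]
      calc ∑ i, (B * J).diag i = ∑ _i : Fin n, ∑ k, B i0 k := by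
            refine Finset.sum_congr rfl fun i _ => ?_
            rw [Matrix.diag_apply, hr i i, hrow i]
        _ = (n : ℂ) * ∑ k, B i0 k := by
            rw [Finset.sum_const, Finset.card_univ, Fintype.card_fin, nsmul_eq_mul]
    have hrc : ∑ k, B i0 k = ∑ k, B k i0 := by
      have h := Matrix.trace_mul_comm B J
      rw [htBJ, htJB] at h
      exact mul_left_cancel₀ hnne h
    constructor
    · ext i j
      rw [hr i j, hrow i, hrc, Matrix.smul_apply, htJB]
      simp only [hJdef, Matrix.of_apply, smul_eq_mul, mul_one]
      field_simp
    · ext i j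
      rw [hc i j, hcol j, Matrix.smul_apply, htJB]
      simp only [hJdef, Matrix.of_apply, smul_eq_mul, mul_one]
      field_simp
  set sM : ℂ := Matrix.trace (J * M') / n with hsM
  set sN : ℂ := Matrix.trace (J * N') / n with hsN
  obtain ⟨hMJ', hJM'⟩ := hAJ M' hM'
  obtain ⟨hNJ', hJN'⟩ := hAJ N' hN'
  -- trace identities
  have htM : Matrix.trace (J * M) = Matrix.trace (J * M') := by
    have h2 := hMproj J hJ
    rw [hJH] at h2
    have h3 : Matrix.trace (M * J) - Matrix.trace (M' * J) = 0 := by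
      rw [← Matrix.trace_sub, ← Matrix.sub_mul]; exact h2
    rw [Matrix.trace_mul_comm J M, Matrix.trace_mul_comm J M']
    exact sub_eq_zero.mp h3
  have htN : Matrix.trace (J * N) = Matrix.trace (J * N') := by
    have h2 := hNproj J hJ
    rw [hJH] at h2
    have h3 : Matrix.trace (N * J) - Matrix.trace (N' * J) = 0 := by
      rw [← Matrix.trace_sub, ← Matrix.sub_mul]; exact h2
    rw [Matrix.trace_mul_comm J N, Matrix.trace_mul_comm J N']
    exact sub_eq_zero.mp h3
  set c : ℂ := (n : ℂ)⁻¹ with hc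
  set X : Matrix (Fin n) (Fin n) ℂ := M' - (c * sM) • J with hX
  set Y : Matrix (Fin n) (Fin n) ℂ := N' - (c * sN) • J with hY
  have hcn : c * n = 1 := inv_mul_cancel₀ hnne
  have hXJ : X * J = 0 := by
    rw [hX, Matrix.sub_mul, hMJ', smul_mul_assoc, hJJ, smul_smul, ← hsM, sub_eq_zero]
    congr 1
    field_simp [hc]
    rw [mul_assoc, hcn, mul_one]
  have hJX : J * X = 0 := by
    rw [hX, Matrix.mul_sub, hJM', mul_smul_comm, hJJ, smul_smul, ← hsM, sub_eq_zero]
    congr 1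
    field_simp [hc]
    rw [mul_assoc, hcn, mul_one]
  have hYJ : Y * J = 0 := by
    rw [hY, Matrix.sub_mul, hNJ', smul_mul_assoc, hJJ, smul_smul, ← hsN, sub_eq_zero]
    congr 1
    field_simp [hc]
    rw [mul_assoc, hcn, mul_one]
  have hJY : J * Y = 0 := by
    rw [hY, Matrix.mul_sub, hJN', mul_smul_comm, hJJ, smul_smul, ← hsN, sub_eq_zero]
    congr 1
    field_simp [hc]
    rw [mul_assoc, hcn, mul_one]
  -- decomposition of the product
  have hM'd : M' = X + (c * sM) • J := by rw [hX]; abel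
  have hN'd : N' = Y + (c * sN) • J := by rw [hY]; abel
  have hMN : M' * N' = X * Y + (c * sM * sN) • J := by
    rw [hM'd, hN'd, Matrix.add_mul, Matrix.mul_add, Matrix.mul_add, mul_smul_comm,
      hXJ, smul_zero, add_zero, smul_mul_assoc, hJY, smul_zero, zero_add,
      smul_mul_assoc, mul_smul_comm, hJJ, smul_smul, smul_smul]
    congr 2
    field_simp [hc]
    linear_combination (c * sM * sN) * hcn
  have hN'H : N'.IsHermitian := proj_isHermitian A hstar hN.isHermitian hN' hNproj
  have htrace : Matrix.trace (M' * N'ᴴ) =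
      Matrix.trace (X * Y) + Matrix.trace (J * M) * Matrix.trace (J * N) / (n ^ 2 : ℂ) := by
    rw [hN'H.eq, hMN, Matrix.trace_add, Matrix.trace_smul, htJ, smul_eq_mul]
    congr 1
    rw [htM, htN, hsM, hsN, hc]
    field_simp
  -- X and Y are positive semidefinite
  obtain ⟨K, hK⟩ : ∃ K : Matrix (Fin n) (Fin n) ℂ, K = 1 - c • J := ⟨_, rfl⟩
  have hKH : Kᴴ = K := by
    rw [hK, Matrix.conjTranspose_sub, Matrix.conjTranspose_smul, Matrix.conjTranspose_one, hJH,
      hc]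
    congr 1
    simp
  have hKA : K ∈ A := by rw [hK]; exact A.sub_mem hI (A.smul_mem _ hJ)
  have hKMKpsd : (K * M * K).PosSemidef := by
    have := hM.conjTranspose_mul_mul_same K
    rwa [hKH] at this
  have hKNKpsd : (K * N * K).PosSemidef := by
    have := hN.conjTranspose_mul_mul_same K
    rwa [hKH] at this
  have hKM' : K * M' = X := by
    rw [hK, Matrix.sub_mul, Matrix.one_mul, smul_mul_assoc, hJM', smul_smul, ← hsM, hX]
  have hKMKX : K * M' * K = X := by
    rw [hKM', hK, Matrix.mul_sub, Matrix.mul_one, mul_smul_comm, hXJ, smul_zero, sub_zero]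
  have hKN' : K * N' = Y := by
    rw [hK, Matrix.sub_mul, Matrix.one_mul, smul_mul_assoc, hJN', smul_smul, ← hsN, hY]
  have hKNKY : K * N' * K = Y := by
    rw [hKN', hK, Matrix.mul_sub, Matrix.mul_one, mul_smul_comm, hYJ, smul_zero, sub_zero]
  have hXA : X ∈ A := A.sub_mem hM' (A.smul_mem _ hJ)
  have hYA : Y ∈ A := A.sub_mem hN' (A.smul_mem _ hJ)
  have hconj : ∀ P : Matrix (Fin n) (Fin n) ℂ, (K * P * K)ᴴ = K * Pᴴ * K := by
    intro P
    rw [Matrix.conjTranspose_mul, Matrix.conjTranspose_mul, hKH, Matrix.mul_assoc]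
  have hcyc : ∀ D P : Matrix (Fin n) (Fin n) ℂ,
      Matrix.trace ((K * D * K) * Pᴴ) = Matrix.trace (D * (K * Pᴴ * K)) := by
    intro D P
    calc Matrix.trace ((K * D * K) * Pᴴ) = Matrix.trace (K * (D * (K * Pᴴ))) := by
          rw [Matrix.mul_assoc, Matrix.mul_assoc]
      _ = Matrix.trace ((D * (K * Pᴴ)) * K) := Matrix.trace_mul_comm _ _
      _ = Matrix.trace (D * (K * Pᴴ * K)) := by rw [Matrix.mul_assoc]
  have hprojX : ∀ P ∈ A, Matrix.trace ((K * M * K - X) * Pᴴ) = 0 := by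
    intro P hP
    have hKPK : K * P * K ∈ A := hmul _ (hmul _ hKA _ hP) _ hKA
    have h1 := hMproj _ hKPK
    rw [hconj P] at h1
    have h2 : K * M * K - X = K * (M - M') * K := by
      rw [Matrix.mul_sub, Matrix.sub_mul, hKMKX]
    rw [h2, hcyc]
    exact h1
  have hprojY : ∀ P ∈ A, Matrix.trace ((K * N * K - Y) * Pᴴ) = 0 := by
    intro P hP
    have hKPK : K * P * K ∈ A := hmul _ (hmul _ hKA _ hP) _ hKA
    have h1 := hNproj _ hKPK
    rw [hconj P] at h1
    have h2 : K * N * K - Y = K * (N - N') * K := by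
      rw [Matrix.mul_sub, Matrix.sub_mul, hKNKY]
    rw [h2, hcyc]
    exact h1
  have hXpsd : X.PosSemidef := proj_posSemidef A hmul hstar hI hKMKpsd hXA hprojX
  have hYpsd : Y.PosSemidef := proj_posSemidef A hmul hstar hI hKNKpsd hYA hprojY
  constructor
  · rw [htrace]
    exact le_add_of_nonneg_left (trace_mul_nonneg hXpsd hYpsd)
  · rw [htrace, add_eq_right]
    constructor
    · intro h
      have hXY := (trace_mul_eq_zero_iff hXpsd hYpsd).mp h
      exact ⟨c * sM * sN, by rw [hMN, hXY, zero_add]⟩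
    · rintro ⟨c', hc'⟩
      have h0 : X * Y + (c * sM * sN) • J = c' • J := by rw [← hMN, hc']
      have h1 : X * Y = (c' - c * sM * sN) • J := by
        rw [sub_smul]; exact eq_sub_of_add_eq h0
      have h2 : X * (Y * J) = ((c' - c * sM * sN) * n) • J := by
        rw [← Matrix.mul_assoc, h1, smul_mul_assoc, hJJ, smul_smul]
      rw [hYJ, Matrix.mul_zero] at h2
      have hJne : J ≠ 0 := by
        intro h
        have := congrFun (congrFun h i0) i0
        simp [hJdef] at this
      have h3 : (c' - c * sM * sN) * n = 0 := by
        rcases smul_eq_zero.mp h2.symm with h | h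
        · exact h
        · exact absurd h hJne
      have h4 : c' - c * sM * sN = 0 := by
        rcases mul_eq_zero.mp h3 with h | h
        · exact h
        · exact absurd h hnne
      rw [h1, h4, zero_smul, Matrix.trace_zero]
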